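/- Let $k$ be a field in which $-1$ is not a square. Then the ring $k[a,b]/(a^2+b^2-1)$ is not a unique factorization domain. -/

import Mathlib

open Polynomial

namespace Stmt12

variable {k : Type*} [Field k]

noncomputable def w (k : Type*) [Field k] : Polynomial k := X ^ 2 - C 1

noncomputable def qp (k : Type*) [Field k] : Polynomial (Polynomial k) := X ^ 2 + C (w k)

lemma w_monic : (w k).Monic := monic_X_pow_sub_C 1 two_ne_zero

lemma w_natDegree : (w k).natDegree = 2 := by
  rw [w]; exact natDegree_X_pow_sub_C

lemma w_ne_zero : (w k) ≠ 0 := w_monic.ne_zero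

lemma qp_monic : (qp k).Monic := monic_X_pow_add_C _ two_ne_zero

lemma qp_degree : (qp k).degree = 2 := by
  rw [qp]; exact degree_X_pow_add_C (by norm_num) _

lemma two_ne (hk : ¬ ∃ x : k, x ^ 2 = -1) : (2 : k) ≠ 0 := by
  intro h
  exact hk ⟨1, by rw [one_pow]; linear_combination h⟩

lemma sq_add_sq_eq_zero (hk : ¬ ∃ x : k, x ^ 2 = -1) {α β : k}
    (h : α ^ 2 + β ^ 2 = 0) : α = 0 ∧ β = 0 := by
  by_cases hβ : β = 0
  · subst hβ
    simp only [ne_eq, OfNat.ofNat_ne_zero, not_false_eq_true, zero_pow, add_zero] at h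
    exact ⟨pow_eq_zero_iff (by norm_num) |>.mp h, rfl⟩
  · exfalso
    exact hk ⟨α / β, by field_simp; linear_combination h⟩

noncomputable def nm (a b : Polynomial k) : Polynomial k := a ^ 2 + b ^ 2 * w k

lemma nm_mul (a b c d : Polynomial k) :
    nm a b * nm c d = nm (a * c - b * d * w k) (a * d + b * c) := by
  unfold nm w; ring

lemma nm_spec (hk : ¬ ∃ x : k, x ^ 2 = -1) {a b : Polynomial k} (hb : b ≠ 0) :
    nm a b ≠ 0 ∧ (nm a b).natDegree = max (2 * a.natDegree) (2 * b.natDegree + 2) := by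
  have hbw : b ^ 2 * w k ≠ 0 := mul_ne_zero (pow_ne_zero _ hb) w_ne_zero
  have hdbw : (b ^ 2 * w k).natDegree = 2 * b.natDegree + 2 := by
    rw [natDegree_mul (pow_ne_zero _ hb) w_ne_zero, natDegree_pow, w_natDegree]
  have hda2 : (a ^ 2).natDegree = 2 * a.natDegree := natDegree_pow a 2
  rcases lt_trichotomy (2 * a.natDegree) (2 * b.natDegree + 2) with h | h | h
  · have hlt : (a ^ 2).natDegree < (b ^ 2 * w k).natDegree := by omega
    have hnd : (nm a b).natDegree = 2 * b.natDegree + 2 := by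
      rw [nm, natDegree_add_eq_right_of_natDegree_lt hlt, hdbw]
    refine ⟨?_, by omega⟩
    intro h0
    rw [h0, natDegree_zero] at hnd; omega
  · -- equal degrees: leading coefficients add up, sum of squares nonzero
    have ha : a ≠ 0 := by
      intro h0; rw [h0, natDegree_zero] at h; omega
    have hca : (a ^ 2).coeff (2 * a.natDegree) = a.leadingCoeff ^ 2 := by
      rw [← hda2, coeff_natDegree, leadingCoeff_pow]
    have hcb : (b ^ 2 * w k).coeff (2 * a.natDegree) = b.leadingCoeff ^ 2 := by
      have hm : 2 * a.natDegree = (b ^ 2 * w k).natDegree := by omega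
      rw [hm, coeff_natDegree, leadingCoeff_mul, leadingCoeff_pow, w_monic.leadingCoeff, mul_one]
    have hcoeff : (nm a b).coeff (2 * a.natDegree) = a.leadingCoeff ^ 2 + b.leadingCoeff ^ 2 := by
      rw [nm, coeff_add, hca, hcb]
    have hne : a.leadingCoeff ^ 2 + b.leadingCoeff ^ 2 ≠ 0 := by
      intro h0
      exact ha (leadingCoeff_eq_zero.mp (sq_add_sq_eq_zero hk h0).1)
    have hcoeff_ne : (nm a b).coeff (2 * a.natDegree) ≠ 0 := by rw [hcoeff]; exact hne
    have hle : (nm a b).natDegree ≤ 2 * a.natDegree := by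
      refine le_trans (natDegree_add_le _ _) ?_
      simp only [hda2, hdbw]
      omega
    have hge : 2 * a.natDegree ≤ (nm a b).natDegree := le_natDegree_of_ne_zero hcoeff_ne
    refine ⟨fun h0 => hcoeff_ne (by rw [h0, coeff_zero]), by omega⟩
  · have hlt : (b ^ 2 * w k).natDegree < (a ^ 2).natDegree := by omega
    have hnd : (nm a b).natDegree = 2 * a.natDegree := by
      rw [nm, natDegree_add_eq_left_of_natDegree_lt hlt, hda2]
    refine ⟨?_, by omega⟩
    intro h0
    rw [h0, natDegree_zero] at hnd; omega

lemma nm_even (hk : ¬ ∃ x : k, x ^ 2 = -1) (a b : Polynomial k) :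
    Even (nm a b).natDegree := by
  by_cases hb : b = 0
  · subst hb
    have h : nm a 0 = a ^ 2 := by unfold nm; ring
    rw [h, natDegree_pow]
    exact ⟨a.natDegree, by ring⟩
  · rw [(nm_spec hk hb).2]
    rcases max_choice (2 * a.natDegree) (2 * b.natDegree + 2) with h | h <;> rw [h]
    · exact ⟨a.natDegree, by ring⟩
    · exact ⟨b.natDegree + 1, by ring⟩

lemma nm_big (hk : ¬ ∃ x : k, x ^ 2 = -1) {a b : Polynomial k} (hb : b ≠ 0) :
    2 ≤ (nm a b).natDegree := by
  rw [(nm_spec hk hb).2]; omega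

/-- Eisenstein: `qp` is irreducible over `k[y]`. -/
lemma qp_irreducible (h2 : (2 : k) ≠ 0) : Irreducible (qp k) := by
  set P : Ideal (Polynomial k) := Ideal.span {X - C 1} with hP
  have hXsub : (X - C 1 : Polynomial k) ≠ 0 := X_sub_C_ne_zero 1
  have hPprime : P.IsPrime := (Ideal.span_singleton_prime hXsub).mpr (prime_X_sub_C 1)
  have hwmem : w k ∈ P := by
    rw [hP, Ideal.mem_span_singleton]
    exact ⟨X + C 1, by rw [w, C_1]; ring⟩
  refine irreducible_of_eisenstein_criterion hPprime ?_ ?_ ?_ ?_ ?_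
  · rw [qp_monic.leadingCoeff]
    intro h
    exact hPprime.ne_top (Ideal.eq_top_iff_one P |>.mpr h)
  · intro n hn
    rw [qp_degree] at hn
    have hn2 : n < 2 := by exact_mod_cast hn
    interval_cases n
    · have h : (qp k).coeff 0 = w k := by simp [qp, coeff_C]
      rw [h]; exact hwmem
    · have h : (qp k).coeff 1 = 0 := by simp [qp, coeff_C]
      rw [h]; exact P.zero_mem
  · rw [qp_degree]; decide
  · have hc0 : (qp k).coeff 0 = w k := by simp [qp, coeff_C]
    rw [hc0, hP, Ideal.span_singleton_pow, Ideal.mem_span_singleton]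
    intro hdvd
    have hw : w k = (X - C 1) * (X + C 1) := by rw [w, C_1]; ring
    rw [hw, pow_two] at hdvd
    have hdvd2 : (X - C 1 : Polynomial k) ∣ (X + C 1) :=
      (mul_dvd_mul_iff_left hXsub).mp hdvd
    have hdvd3 : (X - C 1 : Polynomial k) ∣ C 2 := by
      have h22 : (C 2 : Polynomial k) = (X + C 1) - (X - C 1) := by
        rw [show (2 : k) = 1 + 1 from by norm_num, map_add]; ring
      rw [h22]
      exact dvd_sub hdvd2 dvd_rfl
    have hunit : IsUnit (X - C 1 : Polynomial k) :=
      isUnit_of_dvd_unit hdvd3 (isUnit_C.mpr (isUnit_iff_ne_zero.mpr h2))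
    exact not_isUnit_X_sub_C 1 hunit
  · exact qp_monic.isPrimitive

lemma qp_prime (h2 : (2 : k) ≠ 0) : Prime (qp k) :=
  UniqueFactorizationMonoid.irreducible_iff_prime.mp (qp_irreducible h2)

lemma spanqp_prime (h2 : (2 : k) ≠ 0) : (Ideal.span {qp k}).IsPrime :=
  (Ideal.span_singleton_prime qp_monic.ne_zero).mpr (qp_prime h2)

lemma domT (h2 : (2 : k) ≠ 0) : IsDomain (AdjoinRoot (qp k)) := by
  haveI := spanqp_prime h2
  exact Ideal.Quotient.isDomain (Ideal.span {qp k})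

noncomputable def rt (k : Type*) [Field k] : AdjoinRoot (qp k) := AdjoinRoot.root _

noncomputable def cf (k : Type*) [Field k] : Polynomial k →+* AdjoinRoot (qp k) := AdjoinRoot.of _

lemma rt_sq : rt k ^ 2 = cf k (- w k) := by
  have h : Polynomial.eval₂ (cf k) (rt k) (qp k) = 0 := AdjoinRoot.eval₂_root (qp k)
  have h2 : Polynomial.eval₂ (cf k) (rt k) (X ^ 2 + C (w k)) = 0 := h
  simp only [eval₂_add, eval₂_pow, eval₂_X, eval₂_C] at h2
  rw [map_neg]
  linear_combination h2

lemma rep (z : AdjoinRoot (qp k)) : ∃ a b : Polynomial k, z = cf k a + cf k b * rt k := by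
  obtain ⟨p, rfl⟩ := AdjoinRoot.mk_surjective z
  set h : Polynomial (Polynomial k) := p %ₘ qp k with hh
  refine ⟨h.coeff 0, h.coeff 1, ?_⟩
  have hmk : AdjoinRoot.mk (qp k) p = AdjoinRoot.mk (qp k) h := by
    conv_lhs => rw [← modByMonic_add_div p (qp k)]
    rw [map_add, map_mul, AdjoinRoot.mk_self, zero_mul, add_zero]
  have hdeg : h.degree ≤ 1 := by
    have hlt := degree_modByMonic_lt p qp_monic
    rw [qp_degree] at hlt
    rw [← hh] at hlt
    by_cases h0 : h = 0
    · rw [h0, degree_zero]; exact bot_le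
    · have hn : h.natDegree < 2 := by
        exact_mod_cast (natDegree_lt_iff_degree_lt h0).mpr hlt
      have h1 : h.natDegree ≤ (1 : ℕ) := by omega
      exact natDegree_le_iff_degree_le.mp h1
  rw [hmk]
  conv_lhs => rw [eq_X_add_C_of_degree_le_one hdeg]
  rw [map_add, map_mul, AdjoinRoot.mk_X, AdjoinRoot.mk_C, AdjoinRoot.mk_C]
  show cf k (h.coeff 1) * rt k + cf k (h.coeff 0) = cf k (h.coeff 0) + cf k (h.coeff 1) * rt k
  ring

lemma uniq {a b : Polynomial k} (h : cf k a + cf k b * rt k = 0) : a = 0 ∧ b = 0 := by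
  have hmk : AdjoinRoot.mk (qp k) (C b * X + C a) = 0 := by
    rw [map_add, map_mul, AdjoinRoot.mk_X, AdjoinRoot.mk_C, AdjoinRoot.mk_C]
    show cf k b * rt k + cf k a = 0
    linear_combination h
  rw [AdjoinRoot.mk_eq_zero] at hmk
  have hz : (C b * X + C a : Polynomial (Polynomial k)) = 0 := by
    refine eq_zero_of_dvd_of_degree_lt hmk ?_
    rw [qp_degree]
    exact lt_of_le_of_lt (degree_linear_le) (by decide)
  constructor
  · have := congrArg (fun p => Polynomial.coeff p 0) hz
    simpa using this
  · have := congrArg (fun p => Polynomial.coeff p 1) hz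
    simpa using this

lemma uniq2 {a b c d : Polynomial k}
    (h : cf k a + cf k b * rt k = cf k c + cf k d * rt k) : a = c ∧ b = d := by
  have h0 : cf k (a - c) + cf k (b - d) * rt k = 0 := by
    rw [map_sub, map_sub]
    linear_combination h
  obtain ⟨h1, h2⟩ := uniq h0
  exact ⟨by linear_combination h1, by linear_combination h2⟩

lemma mul_rep (a b c d : Polynomial k) :
    (cf k a + cf k b * rt k) * (cf k c + cf k d * rt k) =
      cf k (a * c - b * d * w k) + cf k (a * d + b * c) * rt k := by
  have h2 : rt k * rt k = cf k (- w k) := by rw [← sq]; exact rt_sq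
  calc (cf k a + cf k b * rt k) * (cf k c + cf k d * rt k)
      = cf k a * cf k c + (cf k a * cf k d + cf k b * cf k c) * rt k
        + (cf k b * cf k d) * (rt k * rt k) := by ring
    _ = _ := by
        rw [h2]
        simp only [map_sub, map_add, map_mul, map_neg]
        ring

lemma rt_self_rep : rt k = cf k 0 + cf k 1 * rt k := by simp

lemma rt_mul (c d : Polynomial k) :
    rt k * (cf k c + cf k d * rt k) = cf k (-(d * w k)) + cf k c * rt k := by
  have h := mul_rep (0 : Polynomial k) 1 c d
  simp only [map_zero, map_one, zero_add, one_mul, zero_mul, zero_sub, zero_add] at h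
  exact h

lemma unit_of_nm (hk : ¬ ∃ x : k, x ^ 2 = -1) {a b : Polynomial k}
    (hnm0 : nm a b ≠ 0) (hdeg0 : (nm a b).natDegree = 0) :
    IsUnit (cf k a + cf k b * rt k) := by
  have hb : b = 0 := by
    by_contra hb
    have := nm_big hk (a := a) hb
    omega
  subst hb
  have hnm : nm a 0 = a ^ 2 := by unfold nm; ring
  rw [hnm] at hnm0 hdeg0
  have ha : a ≠ 0 := fun h0 => hnm0 (by rw [h0]; ring)
  have hda : a.natDegree = 0 := by rw [natDegree_pow] at hdeg0; omega
  have hua : IsUnit a := by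
    rw [Polynomial.eq_C_of_natDegree_eq_zero hda]
    refine isUnit_C.mpr (isUnit_iff_ne_zero.mpr ?_)
    intro h0
    exact ha (by rw [Polynomial.eq_C_of_natDegree_eq_zero hda, h0, map_zero])
  simpa using hua.map (cf k)

lemma rt_ne_zero : rt k ≠ 0 := by
  intro h
  have h0 : cf k 0 + cf k 1 * rt k = 0 := by rw [← rt_self_rep]; exact h
  exact one_ne_zero ((uniq h0).2)

lemma rt_not_unit : ¬ IsUnit (rt k) := by
  intro hu
  obtain ⟨z, hz⟩ := hu.exists_right_inv
  obtain ⟨c, d, rfl⟩ := rep z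
  rw [rt_mul] at hz
  have h1 : (1 : AdjoinRoot (qp k)) = cf k 1 + cf k 0 * rt k := by simp
  rw [h1] at hz
  obtain ⟨hA, _⟩ := uniq2 hz
  have hwu : IsUnit (w k) := by
    refine IsUnit.of_mul_eq_one (- d) ?_
    linear_combination hA
  have h2 := natDegree_eq_zero_of_isUnit hwu
  rw [w_natDegree] at h2
  omega

lemma rt_irreducible (hk : ¬ ∃ x : k, x ^ 2 = -1) : Irreducible (rt k) := by
  refine ⟨rt_not_unit, ?_⟩
  intro s t hst
  obtain ⟨a, b, rfl⟩ := rep s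
  obtain ⟨c, d, rfl⟩ := rep t
  rw [mul_rep] at hst
  have h0 : cf k 0 + cf k 1 * rt k = cf k (a * c - b * d * w k) + cf k (a * d + b * c) * rt k := by
    rw [← rt_self_rep]; exact hst
  obtain ⟨hA, hB⟩ := uniq2 h0
  have hNN : nm a b * nm c d = w k := by
    rw [nm_mul, ← hA, ← hB]
    unfold nm; ring
  have hN1 : nm a b ≠ 0 := by
    intro h0; rw [h0, zero_mul] at hNN; exact w_ne_zero hNN.symm
  have hN2 : nm c d ≠ 0 := by
    intro h0; rw [h0, mul_zero] at hNN; exact w_ne_zero hNN.symm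
  have hdeg : (nm a b).natDegree + (nm c d).natDegree = 2 := by
    rw [← natDegree_mul hN1 hN2, hNN, w_natDegree]
  obtain ⟨u1, hu1⟩ := nm_even hk a b
  obtain ⟨u2, hu2⟩ := nm_even hk c d
  rcases Nat.eq_zero_or_pos (nm a b).natDegree with h | h
  · exact Or.inl (unit_of_nm hk hN1 h)
  · refine Or.inr (unit_of_nm hk hN2 ?_)
    omega

lemma rt_dvd_contradiction (hk : ¬ ∃ x : k, x ^ 2 = -1) {p : Polynomial k}
    (hdvd : rt k ∣ cf k p) (hdp : p.natDegree = 1) : False := by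
  obtain ⟨z, hz⟩ := hdvd
  obtain ⟨c, d, rfl⟩ := rep z
  rw [rt_mul] at hz
  have h1 : cf k p = cf k p + cf k 0 * rt k := by simp
  rw [h1] at hz
  obtain ⟨hA, _⟩ := uniq2 hz
  have hp : p = -(d * w k) := hA
  by_cases hd : d = 0
  · rw [hd] at hp
    simp only [zero_mul, neg_zero] at hp
    rw [hp, natDegree_zero] at hdp
    omega
  · have h3 : p.natDegree = d.natDegree + 2 := by
      rw [hp, natDegree_neg, natDegree_mul hd w_ne_zero, w_natDegree]
    omega

lemma not_ufm (hk : ¬ ∃ x : k, x ^ 2 = -1) :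
    letI := domT (two_ne hk)
    ¬ UniqueFactorizationMonoid (AdjoinRoot (qp k)) := by
  letI := domT (two_ne hk)
  intro hU
  have hprime : Prime (rt k) :=
    UniqueFactorizationMonoid.irreducible_iff_prime.mp (rt_irreducible hk)
  have hfact : cf k (X - C 1) * cf k (X + C 1) = rt k * (- rt k) := by
    rw [← map_mul]
    have h1 : (X - C 1 : Polynomial k) * (X + C 1) = w k := by rw [w, C_1]; ring
    rw [h1]
    have h2 := rt_sq (k := k)
    rw [map_neg] at h2
    linear_combination h2
  have hdvd : rt k ∣ cf k (X - C 1) * cf k (X + C 1) := by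
    rw [hfact]; exact dvd_mul_right _ _
  rcases hprime.2.2 _ _ hdvd with h | h
  · exact rt_dvd_contradiction hk h (natDegree_X_sub_C 1)
  · exact rt_dvd_contradiction hk h (natDegree_X_add_C 1)

noncomputable def e (k : Type*) [Field k] : MvPolynomial (Fin 2) k ≃+* Polynomial (Polynomial k) :=
  (MvPolynomial.finSuccEquiv k 1).toRingEquiv.trans
    (Polynomial.mapEquiv ((MvPolynomial.finSuccEquiv k 0).toRingEquiv.trans
      (Polynomial.mapEquiv (MvPolynomial.isEmptyRingEquiv k (Fin 0)))))

lemma e_f : e k ((MvPolynomial.X 0) ^ 2 + MvPolynomial.X 1 ^ 2 - 1) = qp k := by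
  have hinner : ((MvPolynomial.finSuccEquiv k 0).toRingEquiv.trans
      (Polynomial.mapEquiv (MvPolynomial.isEmptyRingEquiv k (Fin 0)))) (MvPolynomial.X 0)
      = Polynomial.X := by
    rw [RingEquiv.trans_apply]
    simp [MvPolynomial.finSuccEquiv_X_zero, Polynomial.mapEquiv_apply]
  have h1 : (1 : Fin 2) = Fin.succ 0 := rfl
  rw [h1]
  simp only [e, qp, w, RingEquiv.trans_apply, AlgEquiv.toRingEquiv_eq_coe,
    AlgEquiv.coe_ringEquiv, map_sub, map_add, map_pow, map_one,
    MvPolynomial.finSuccEquiv_X_zero, MvPolynomial.finSuccEquiv_X_succ,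
    Polynomial.mapEquiv_apply, Polynomial.map_sub, Polynomial.map_add,
    Polynomial.map_pow, Polynomial.map_one, Polynomial.map_X, Polynomial.map_C]
  show Polynomial.X ^ 2 + Polynomial.C
      (((MvPolynomial.finSuccEquiv k 0).toRingEquiv.trans
        (Polynomial.mapEquiv (MvPolynomial.isEmptyRingEquiv k (Fin 0)))) (MvPolynomial.X 0)) ^ 2
      - 1 = Polynomial.X ^ 2 + (Polynomial.C Polynomial.X ^ 2 - 1)
  rw [hinner]
  ring

lemma hmap : (Ideal.span {(MvPolynomial.X 0 : MvPolynomial (Fin 2) k) ^ 2 +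
      MvPolynomial.X 1 ^ 2 - 1}).map (e k : MvPolynomial (Fin 2) k →+* Polynomial (Polynomial k))
      = Ideal.span {qp k} := by
  rw [Ideal.map_span, Set.image_singleton]
  congr 1
  congr 1
  exact e_f

noncomputable def E (k : Type*) [Field k] :
    (MvPolynomial (Fin 2) k ⧸ Ideal.span {(MvPolynomial.X 0 : MvPolynomial (Fin 2) k) ^ 2 +
      MvPolynomial.X 1 ^ 2 - 1}) ≃+* AdjoinRoot (qp k) :=
  Ideal.quotientEquiv _ (Ideal.span {qp k}) (e k) hmap.symm

end Stmt12

theorem stmt_12 {k : Type*} [Field k] (hk : ¬ ∃ x : k, x ^ 2 = -1) :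
    ∃ hd : IsDomain (MvPolynomial (Fin 2) k ⧸
        Ideal.span {(MvPolynomial.X 0 : MvPolynomial (Fin 2) k) ^ 2 +
          MvPolynomial.X 1 ^ 2 - 1}),
      ¬ (letI := hd;
        UniqueFactorizationMonoid (MvPolynomial (Fin 2) k ⧸
          Ideal.span {(MvPolynomial.X 0 : MvPolynomial (Fin 2) k) ^ 2 +
            MvPolynomial.X 1 ^ 2 - 1})) := by
  have h2 : (2 : k) ≠ 0 := Stmt12.two_ne hk
  haveI hT : IsDomain (AdjoinRoot (Stmt12.qp k)) := Stmt12.domT h2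
  have hd : IsDomain (MvPolynomial (Fin 2) k ⧸
      Ideal.span {(MvPolynomial.X 0 : MvPolynomial (Fin 2) k) ^ 2 +
        MvPolynomial.X 1 ^ 2 - 1}) :=
    MulEquiv.isDomain (AdjoinRoot (Stmt12.qp k)) (Stmt12.E k).toMulEquiv
  refine ⟨hd, ?_⟩
  intro hU
  exact Stmt12.not_ufm hk
    ((Stmt12.E k).toMulEquiv.uniqueFactorizationMonoid hU)
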